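/- Let |Ψ⁻⟩ = (|01⟩ - |10⟩)/√2 and let W_f = f|Ψ⁻⟩⟨Ψ⁻| + ((1-f)/4)𝟙₄ be a Werner state. For rotationally covariant POVM densities M_φ^{r_A} and M_ψ^{r_B} (where M_φ^r = (1/π)U_φ*(𝟙 + r σ_x)U_φ, U_φ = exp(-iφσ_z)), the joint probability density satisfies tr[W_f (M_φ^{r_A} ⊗ M_ψ^{r_B})] = (1 - f r_A r_B cos(2(φ - ψ)))/π². -/

import Mathlib

open Matrix Complex
open scoped Matrix Kronecker Real ComplexOrder

noncomputable section

/-- The Pauli matrix `σ_x`. -/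
def σx : Matrix (Fin 2) (Fin 2) ℂ := !![0, 1; 1, 0]
/-- The Pauli matrix `σ_y`. -/
def σy : Matrix (Fin 2) (Fin 2) ℂ := !![0, -Complex.I; Complex.I, 0]
/-- The Pauli matrix `σ_z`. -/
def σz : Matrix (Fin 2) (Fin 2) ℂ := !![1, 0; 0, -1]

/-- `U φ = exp(-i φ σ_z)`, the unitary rotation about the z-axis. -/
def U (φ : ℝ) : Matrix (Fin 2) (Fin 2) ℂ :=
  NormedSpace.exp ((-(Complex.I * (φ : ℂ))) • σz)

/-- The rotationally covariant POVM density `M_φ^r = (1/π) U_φ* (𝟙 + r σ_x) U_φ`. -/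
def Mpovm (r φ : ℝ) : Matrix (Fin 2) (Fin 2) ℂ :=
  ((π : ℂ))⁻¹ • ((U φ)ᴴ * ((1 : Matrix (Fin 2) (Fin 2) ℂ) + (r : ℂ) • σx) * U φ)

/-- A density matrix: positive semidefinite with unit trace. -/
def IsDensity {n : Type*} [Fintype n] [DecidableEq n] (ρ : Matrix n n ℂ) : Prop :=
  ρ.PosSemidef ∧ ρ.trace = 1

/-- The singlet vector `|Ψ⁻⟩ = (|01⟩ - |10⟩)/√2`. -/
def ψminus : Fin 2 × Fin 2 → ℂ := fun p =>
  if p = (0, 1) then (Real.sqrt 2)⁻¹ else if p = (1, 0) then -(Real.sqrt 2)⁻¹ else 0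

/-- The projector `|Ψ⁻⟩⟨Ψ⁻|`. -/
def singletProj : Matrix (Fin 2 × Fin 2) (Fin 2 × Fin 2) ℂ :=
  Matrix.vecMulVec ψminus (fun j => (starRingEnd ℂ) (ψminus j))

/-- The Werner state `W_f = f |Ψ⁻⟩⟨Ψ⁻| + ((1-f)/4) 𝟙₄`. -/
def Werner (f : ℝ) : Matrix (Fin 2 × Fin 2) (Fin 2 × Fin 2) ℂ :=
  (f : ℂ) • singletProj + (((1 - f) / 4 : ℝ) : ℂ) • (1 : Matrix (Fin 2 × Fin 2) (Fin 2 × Fin 2) ℂ)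

lemma U_eq (φ : ℝ) : U φ = !![Complex.exp (-(Complex.I * φ)), 0; 0, Complex.exp (Complex.I * φ)] := by
  have hσz : σz = Matrix.diagonal ![1, -1] := by
    ext i j; fin_cases i <;> fin_cases j <;> simp [σz, Matrix.diagonal]
  have h : (-(Complex.I * (φ : ℂ))) • σz
      = Matrix.diagonal ![-(Complex.I * φ), Complex.I * φ] := by
    rw [hσz, ← Matrix.diagonal_smul]
    congr 1; ext i; fin_cases i <;> simp
  rw [U, h, Matrix.exp_diagonal]
  ext i j
  fin_cases i <;> fin_cases j <;>
    simp [Matrix.diagonal, Pi.exp_def, ← Complex.exp_eq_exp_ℂ]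

lemma Mpovm_eq (r φ : ℝ) : Mpovm r φ = ((π : ℂ))⁻¹ •
    !![1, (r : ℂ) * Complex.exp (2 * Complex.I * φ);
       (r : ℂ) * Complex.exp (-(2 * Complex.I * φ)), 1] := by
  rw [Mpovm, U_eq]
  congr 1
  ext i j
  fin_cases i <;> fin_cases j <;>
    simp [Matrix.mul_apply, Matrix.conjTranspose_apply, Fin.sum_univ_two, σx,
      Matrix.one_apply, ← Complex.exp_conj, ← Complex.exp_add] <;>
    (try (ring_nf; rw [sq, ← Complex.exp_add]; ring_nf))

/-- the joint probability density of the Werner state `W_f` measured with two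
rotationally covariant POVM densities is
`tr[W_f (M_φ^{r_A} ⊗ M_ψ^{r_B})] = (1 - f r_A r_B cos(2(φ - ψ)))/π²`. -/
theorem werner_joint_density (f rA rB : ℝ) (hf : f ∈ Set.Icc (0:ℝ) 1)
    (hrA : rA ∈ Set.Icc (0:ℝ) 1) (hrB : rB ∈ Set.Icc (0:ℝ) 1) (φ ψ : ℝ) :
    (Werner f * (Mpovm rA φ ⊗ₖ Mpovm rB ψ)).trace
      = (((1 - f * rA * rB * Real.cos (2 * (φ - ψ))) / π ^ 2 : ℝ) : ℂ) := by
  have hπ : (π : ℂ) ≠ 0 := by exact_mod_cast Real.pi_ne_zero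
  have h2 : ((Real.sqrt 2 : ℝ) : ℂ) * ((Real.sqrt 2 : ℝ) : ℂ) = 2 := by
    rw [← Complex.ofReal_mul]
    norm_num [Real.mul_self_sqrt]
  rw [Mpovm_eq, Mpovm_eq]
  simp only [Matrix.trace, Matrix.diag, Matrix.mul_apply, Fintype.sum_prod_type,
    Fin.sum_univ_two, Werner, singletProj, Matrix.add_apply, Matrix.smul_apply,
    Matrix.kroneckerMap_apply, Matrix.vecMulVec_apply, ψminus, Matrix.one_apply,
    Matrix.cons_val', Matrix.cons_val_zero, Matrix.cons_val_one, Matrix.head_cons,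
    Matrix.head_fin_const, Matrix.empty_val', Matrix.cons_val_fin_one, smul_eq_mul]
  norm_num [Prod.ext_iff, Complex.ofReal_cos, Complex.cos, map_inv₀, Complex.conj_ofReal]
  rw [show ((2:ℂ) * (φ - ψ) * Complex.I) = 2*Complex.I*φ + -(2*Complex.I*ψ) by ring,
      Complex.exp_add,
      show (-((2:ℂ)*Complex.I*(φ:ℂ) + -(2*Complex.I*ψ))) = -(2*Complex.I*φ) + (2*Complex.I*ψ) by ring,
      Complex.exp_add]
  have h2' : (((Real.sqrt 2 : ℝ) : ℂ))⁻¹ * (((Real.sqrt 2 : ℝ) : ℂ))⁻¹ = (2:ℂ)⁻¹ := by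
    rw [← mul_inv, h2]
  rw [h2']
  field_simp
  ring
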